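/- Run Phragmén's rule on an approval profile and let ℓ_i(t) denote the load of voter i after t steps. Let N' ⊆ N be a group of voters and suppose that after step t some alternative approved by all voters of N' is still unranked. Then Σ_{i∈N'} (max_{j∈N} ℓ_j(t) − ℓ_i(t)) ≤ 1. -/

import Mathlib

open Finset

/-- The set of the top `k` alternatives of the ranking `r`
(where `r j` is the alternative at position `j`). -/
def topk {m : ℕ} (r : Fin m ≃ Fin m) (k : ℕ) : Finset (Fin m) :=
  Finset.univ.filter fun a => (r.symm a : ℕ) < k

/-- Average representation of the group `N'` with respect to the set `S`. -/
def avgRep {n m : ℕ} (App : Fin n → Finset (Fin m)) (N' : Finset (Fin n))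
    (S : Finset (Fin m)) : ℚ :=
  (∑ i ∈ N', ((App i ∩ S).card : ℚ)) / (N'.card : ℚ)

/-- `N'` is `(α, λ)`-significant: it has `⌈αn⌉` members and cohesiveness at least `λ`. -/
def Significant {n m : ℕ} (App : Fin n → Finset (Fin m)) (α : ℚ) (lam : ℕ)
    (N' : Finset (Fin n)) : Prop :=
  (N'.card : ℤ) = ⌈α * (n : ℚ)⌉ ∧ lam ≤ (N'.inf App).card

/-- `load` is a valid execution trace of Phragmén's rule producing the ranking `r`:
`load t i` is the load of voter `i` after `t` steps. At step `t+1` (which ranks the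
alternative `r t` at position `t`), one unit of load is distributed among the approvers
of `r t`, and the chosen alternative together with its load distribution minimizes the
resulting maximum voter load among all still-unranked alternatives and all valid
distributions for them. -/
def IsPhragmenExec {n m : ℕ} (App : Fin n → Finset (Fin m)) (r : Fin m ≃ Fin m)
    (load : ℕ → Fin n → ℚ) : Prop :=
  (∀ i, load 0 i = 0) ∧
  (∀ t : Fin m, ∀ i, load (t : ℕ) i ≤ load ((t : ℕ) + 1) i) ∧
  (∀ t : Fin m, ∀ i, load ((t : ℕ) + 1) i ≠ load (t : ℕ) i → r t ∈ App i) ∧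
  (∀ t : Fin m, ∑ i, (load ((t : ℕ) + 1) i - load (t : ℕ) i) = 1) ∧
  (∀ t : Fin m, ∀ b : Fin m, (t : ℕ) ≤ (r.symm b : ℕ) →
    ∀ δ : Fin n → ℚ, (∀ i, 0 ≤ δ i) → (∀ i, δ i ≠ 0 → b ∈ App i) → (∑ i, δ i) = 1 →
      ∀ i, ∃ j, load ((t : ℕ) + 1) i ≤ load (t : ℕ) j + δ j)

theorem phragmen_excess_bound
    {n m : ℕ} (hn : 0 < n) (App : Fin n → Finset (Fin m))
    (hApp : ∀ i, (App i).Nonempty)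
    (r : Fin m ≃ Fin m) (load : ℕ → Fin n → ℚ)
    (hexec : IsPhragmenExec App r load)
    (t : ℕ) (ht : t ≤ m) (N' : Finset (Fin n))
    (hunranked : ∃ h : Fin m, (∀ i ∈ N', h ∈ App i) ∧ t ≤ (r.symm h : ℕ)) :
    ∑ i ∈ N',
      (Finset.univ.sup' ⟨⟨0, hn⟩, Finset.mem_univ _⟩ (load t) - load t i) ≤ 1 := by
  obtain ⟨h0, hmono, hsupp, hsum, hopt⟩ := hexec
  revert ht hunranked
  induction t with
  | zero =>
    intro _ _
    have hsup : Finset.univ.sup' ⟨⟨0, hn⟩, Finset.mem_univ _⟩ (load 0) = 0 :=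
      le_antisymm (Finset.sup'_le _ _ fun i _ => (h0 i).le)
        (by exact le_trans (h0 ⟨0, hn⟩).ge (Finset.le_sup' (load 0) (Finset.mem_univ _)))
    simp [hsup, h0]
  | succ s ih =>
    intro ht hun
    obtain ⟨h, hall, hrank⟩ := hun
    have hs : s < m := ht
    have hB := ih (Nat.le_of_lt hs) ⟨h, hall, Nat.le_of_succ_le hrank⟩
    rcases N'.eq_empty_or_nonempty with hN | hN
    · simp [hN]
    obtain ⟨Lm, hLm⟩ : ∃ L : ℚ, Finset.univ.sup' ⟨⟨0, hn⟩, Finset.mem_univ _⟩ (load s) = L :=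
      ⟨_, rfl⟩
    rw [hLm] at hB
    have hload_le : ∀ j, load s j ≤ Lm := by
      intro j
      rw [← hLm]
      exact Finset.le_sup' (load s) (Finset.mem_univ j)
    obtain ⟨B, hBdef⟩ : ∃ B : ℚ, ∑ i ∈ N', (Lm - load s i) = B := ⟨_, rfl⟩
    rw [hBdef] at hB
    have hcard : (0 : ℚ) < N'.card := by exact_mod_cast hN.card_pos
    obtain ⟨c, hc⟩ : ∃ c : ℚ, c = Lm + (1 - B) / N'.card := ⟨_, rfl⟩
    have hLc : Lm ≤ c := by
      have : (0 : ℚ) ≤ (1 - B) / N'.card := div_nonneg (by linarith) hcard.le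
      linarith
    obtain ⟨δ, hδ⟩ : ∃ δ : Fin n → ℚ,
        ∀ i, δ i = if i ∈ N' then c - load s i else 0 :=
      ⟨fun i => if i ∈ N' then c - load s i else 0, fun i => rfl⟩
    have hδ0 : ∀ i, 0 ≤ δ i := by
      intro i
      rw [hδ]
      by_cases hi : i ∈ N'
      · rw [if_pos hi]; linarith [hload_le i]
      · rw [if_neg hi]
    have hδsupp : ∀ i, δ i ≠ 0 → h ∈ App i := by
      intro i hne
      by_cases hi : i ∈ N'
      · exact hall i hi
      · exact absurd ((hδ i).trans (if_neg hi)) hne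
    have hsumN : ∑ i ∈ N', (c - load s i) = 1 := by
      have h2 : ∀ i ∈ N', c - load s i = (Lm - load s i) + (1 - B) / N'.card := by
        intro i _; rw [hc]; ring
      rw [Finset.sum_congr rfl h2, Finset.sum_add_distrib, hBdef, Finset.sum_const,
        nsmul_eq_mul]
      field_simp
      ring
    have hδsum : (∑ i, δ i) = 1 := by
      rw [Finset.sum_congr rfl (fun i _ => hδ i), Finset.sum_ite_mem, Finset.univ_inter,
        hsumN]
    have hub : ∀ i, load (s + 1) i ≤ c := by
      intro i
      obtain ⟨j, hj⟩ := hopt ⟨s, hs⟩ h (Nat.le_of_succ_le hrank) δ hδ0 hδsupp hδsum i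
      have hj' : load (s + 1) i ≤ load s j + δ j := hj
      rw [hδ] at hj'
      by_cases hjN : j ∈ N'
      · rw [if_pos hjN] at hj'; linarith
      · rw [if_neg hjN] at hj'; linarith [hload_le j]
    have hsup1 : Finset.univ.sup' ⟨⟨0, hn⟩, Finset.mem_univ _⟩ (load (s + 1)) ≤ c :=
      Finset.sup'_le _ _ fun i _ => hub i
    calc ∑ i ∈ N', (Finset.univ.sup' ⟨⟨0, hn⟩, Finset.mem_univ _⟩ (load (s + 1)) - load (s + 1) i)
        ≤ ∑ i ∈ N', (c - load s i) := by
          refine Finset.sum_le_sum fun i _ => ?_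
          have hm : load s i ≤ load (s + 1) i := hmono ⟨s, hs⟩ i
          linarith
      _ = 1 := hsumN
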